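/- Let Z ⊂ ℤ be a finite set with e elements and let ℂ[Z] be the e-dimensional vector space of Laurent polynomials f ∈ ℂ[t,t⁻¹] whose support is contained in Z. Then the set of vanishing orders at t = 1 of the nonzero elements of ℂ[Z] is exactly {0, 1, …, e−1}. -/

import Mathlib

open Polynomial

lemma coeff_X_mul_derivative (q : Polynomial ℂ) (n : ℕ) :
    (X * derivative q).coeff n = (n : ℂ) * q.coeff n := by
  cases n with
  | zero => simp
  | succ m =>
    rw [coeff_X_mul, coeff_derivative]
    push_cast
    ring

lemma dvd_X_mul_derivative {q : Polynomial ℂ} {k : ℕ}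
    (h : (X - 1) ^ (k + 1) ∣ q) : (X - 1) ^ k ∣ X * derivative q := by
  obtain ⟨g, rfl⟩ := h
  refine ⟨X * ((C ((k : ℂ) + 1)) * g + (X - 1) * derivative g), ?_⟩
  rw [derivative_mul, derivative_pow]
  simp only [derivative_sub, derivative_X, derivative_one, sub_zero, mul_one,
    Nat.add_sub_cancel, Nat.cast_add, Nat.cast_one, map_add, map_one]
  ring

lemma upper_poly (k : ℕ) : ∀ q : Polynomial ℂ, q ≠ 0 → (X - 1) ^ k ∣ q →
    k < q.support.card := by
  induction k with
  | zero =>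
    intro q hq _
    simpa [Finset.card_pos, Polynomial.nonempty_support_iff] using hq
  | succ k ih =>
    intro q hq hdvd
    obtain ⟨n₀, hn₀⟩ : q.support.Nonempty := nonempty_support_iff.mpr hq
    set q₁ := X * derivative q - C (n₀ : ℂ) * q with hq₁def
    have hcoeff : ∀ n, q₁.coeff n = ((n : ℂ) - n₀) * q.coeff n := by
      intro n
      rw [hq₁def, coeff_sub, coeff_X_mul_derivative, coeff_C_mul]
      ring
    have hsupp : q₁.support = q.support.erase n₀ := by
      ext n
      simp only [mem_support_iff, hcoeff, Finset.mem_erase, mul_ne_zero_iff,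
        sub_ne_zero, ne_eq]
      constructor
      · rintro ⟨h1, h2⟩
        exact ⟨fun h => h1 (by rw [h]), h2⟩
      · rintro ⟨h1, h2⟩
        exact ⟨fun h => h1 (Nat.cast_injective h), h2⟩
    have heval : q.eval 1 = 0 := by
      obtain ⟨g, rfl⟩ := hdvd
      simp [zero_pow]
    have hq₁ : q₁ ≠ 0 := by
      intro h0
      have hsub : q.support = {n₀} := by
        have : q.support.erase n₀ = ∅ := by rw [← hsupp, h0]; simp
        rcases (Finset.erase_eq_empty_iff _ _).mp this with h | h
        · exact absurd hn₀ (by simp [h])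
        · exact h
      have : q.eval 1 = q.coeff n₀ := by
        rw [eval_eq_sum, Polynomial.sum_def, hsub, Finset.sum_singleton, one_pow, mul_one]
      rw [heval] at this
      exact (mem_support_iff.mp hn₀) this.symm
    have hd1 : (X - 1) ^ k ∣ q₁ := by
      refine dvd_sub (dvd_X_mul_derivative hdvd) ?_
      exact Dvd.dvd.mul_left (dvd_trans (pow_dvd_pow _ (Nat.le_succ k)) hdvd) _
    have hlt := ih q₁ hq₁ hd1
    rw [hsupp, Finset.card_erase_of_mem hn₀] at hlt
    have hpos : 0 < q.support.card := Finset.card_pos.mpr ⟨n₀, hn₀⟩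
    omega

lemma exists_poly (S : Finset ℕ) (k : ℕ) (hk : k < S.card) :
    ∃ q : Polynomial ℂ, q ≠ 0 ∧ q.support ⊆ S ∧ (X - 1) ^ k ∣ q := by
  classical
  let L : (↥S → ℂ) →ₗ[ℂ] (Fin k → ℂ) :=
    { toFun := fun c j => ∑ n : ↥S, c n * ((n : ℕ).choose j : ℂ)
      map_add' := by
        intro x y
        funext j
        simp [add_mul, Finset.sum_add_distrib]
      map_smul' := by
        intro r x
        funext j
        simp [Finset.mul_sum, mul_assoc] }
  have hker : LinearMap.ker L ≠ ⊥ := by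
    apply LinearMap.ker_ne_bot_of_finrank_lt
    rw [Module.finrank_pi, Module.finrank_pi]
    simpa using hk
  obtain ⟨c, hcL, hc0⟩ := (Submodule.ne_bot_iff _).mp hker
  have hcL' : ∀ j : Fin k, ∑ n : ↥S, c n * ((n : ℕ).choose j : ℂ) = 0 := by
    intro j
    have := LinearMap.mem_ker.mp hcL
    exact congrFun this j
  refine ⟨∑ n : ↥S, C (c n) * X ^ (n : ℕ), ?_, ?_, ?_⟩
  case refine_3 =>
    have key : (∑ n : ↥S, C (c n) * X ^ (n : ℕ)) =
        aeval ((X : Polynomial ℂ) - 1) (∑ n : ↥S, C (c n) * (X + 1) ^ (n : ℕ)) := by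
      rw [map_sum]
      congr 1
      funext n
      rw [map_mul, map_pow, map_add, aeval_X, map_one, sub_add_cancel, aeval_C]
      rfl
    rw [key]
    have hXk : (X : Polynomial ℂ) ^ k ∣ ∑ n : ↥S, C (c n) * (X + 1) ^ (n : ℕ) := by
      rw [X_pow_dvd_iff]
      intro d hd
      rw [finset_sum_coeff]
      simp only [coeff_C_mul, coeff_X_add_one_pow]
      exact hcL' ⟨d, hd⟩
    have := map_dvd (aeval ((X : Polynomial ℂ) - 1)) hXk
    rwa [map_pow, aeval_X] at this
  case refine_2 =>
    intro m hm
    rw [mem_support_iff, finset_sum_coeff] at hm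
    by_contra hmS
    apply hm
    apply Finset.sum_eq_zero
    intro n _
    rw [coeff_C_mul, coeff_X_pow]
    have : m ≠ (n : ℕ) := fun h => hmS (h ▸ n.2)
    simp [this]
  case refine_1 =>
    have : ∃ n : ↥S, c n ≠ 0 := by
      by_contra h
      push_neg at h
      exact hc0 (funext h)
    obtain ⟨n, hn⟩ := this
    intro h0
    apply hn
    have : (∑ m : ↥S, C (c m) * X ^ (m : ℕ)).coeff (n : ℕ) = c n := by
      rw [finset_sum_coeff]
      rw [Finset.sum_eq_single n]
      · rw [coeff_C_mul, coeff_X_pow, if_pos rfl, mul_one]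
      · intro m _ hmn
        rw [coeff_C_mul, coeff_X_pow]
        have : (n : ℕ) ≠ (m : ℕ) := fun h => hmn (Subtype.ext h.symm)
        simp [this]
      · intro h; exact absurd (Finset.mem_univ n) h
    rw [h0, coeff_zero] at this
    exact this.symm

open LaurentPolynomial in
lemma upper_laurent (f : LaurentPolynomial ℂ) (hf : f ≠ 0) (k : ℕ)
    (h : (T 1 - 1) ^ k ∣ f) : k < f.coeff.support.card := by
  obtain ⟨n, q, hq⟩ := f.exists_T_pow
  obtain ⟨g, hg⟩ := h
  obtain ⟨m, g', hg'⟩ := g.exists_T_pow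
  have key : q * X ^ m = (X - 1) ^ k * (g' * X ^ n) := by
    apply Polynomial.toLaurent_injective
    simp only [map_mul, map_pow, map_sub, Polynomial.toLaurent_X, map_one, hq, hg', hg,
      LaurentPolynomial.T_pow, one_mul, mul_one]
    ring
  have hdq : (X - 1) ^ k ∣ q := by
    have cop : IsCoprime ((X : Polynomial ℂ) - 1) X := ⟨-1, 1, by ring⟩
    exact (cop.pow).dvd_of_dvd_mul_right ⟨g' * X ^ n, key⟩
  have hq0 : q ≠ 0 := by
    intro h0
    rw [h0, map_zero] at hq
    exact hf ((LaurentPolynomial.isUnit_T (n : ℤ)).mul_left_eq_zero.mp hq.symm)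
  have hlt := upper_poly k q hq0 hdq
  have hcard : q.support.card = f.coeff.support.card := by
    have h1 : (Polynomial.toLaurent q).coeff.support =
        f.coeff.support.map (addRightEmbedding (n : ℤ)) := by
      rw [hq]
      exact AddMonoidAlgebra.support_coeff_mul_single f 1 (by simp) (n : ℤ)
    have h2 := LaurentPolynomial.toLaurent_support q
    rw [h2] at h1
    calc q.support.card = (q.support.map Nat.castEmbedding).card :=
          (Finset.card_map _).symm
      _ = (f.coeff.support.map (addRightEmbedding (n : ℤ))).card := by rw [h1]
      _ = f.coeff.support.card := Finset.card_map _
  omega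

open LaurentPolynomial in
theorem stmt0 (Z : Finset ℤ) :
    {k : ℕ | ∃ f : LaurentPolynomial ℂ, f ≠ 0 ∧ f.coeff.support ⊆ Z ∧
      (T 1 - 1) ^ k ∣ f ∧ ¬ (T 1 - 1) ^ (k + 1) ∣ f} =
    {k : ℕ | k < Z.card} := by
  ext k
  simp only [Set.mem_setOf_eq]
  constructor
  · rintro ⟨f, hf0, hsub, hdvd, -⟩
    exact lt_of_lt_of_le (upper_laurent f hf0 k hdvd) (Finset.card_le_card hsub)
  · intro hk
    obtain ⟨Z', hZ'sub, hZ'card⟩ := Z.exists_subset_card_eq (show k + 1 ≤ Z.card from hk)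
    have hZ'ne : Z'.Nonempty := Finset.card_pos.mp (by omega)
    set N : ℕ := (Z'.min' hZ'ne).natAbs with hN
    have hmin : ∀ z ∈ Z', 0 ≤ z + N := by
      intro z hz
      have := Z'.min'_le z hz
      omega
    set S : Finset ℕ := Z'.image (fun z : ℤ => (z + (N : ℤ)).toNat) with hS
    have hinj : Set.InjOn (fun z => (z + (N : ℤ)).toNat) Z' := by
      intro a ha b hb hab
      have h1 := hmin a ha
      have h2 := hmin b hb
      simp only at hab
      omega
    have hScard : S.card = k + 1 := by
      rw [hS, Finset.card_image_of_injOn hinj, hZ'card]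
    obtain ⟨q, hq0, hqsupp, hqdvd⟩ := exists_poly S k (by omega)
    refine ⟨Polynomial.toLaurent q * T (-(N : ℤ)), ?_, ?_, ?_, ?_⟩
    · exact mul_ne_zero (Polynomial.toLaurent_ne_zero.mpr hq0)
        ((isUnit_T _).ne_zero)
    · have h1 : (Polynomial.toLaurent q * T (-(N : ℤ))).coeff.support =
          (Polynomial.toLaurent q).coeff.support.map (addRightEmbedding (-(N : ℤ))) :=
        AddMonoidAlgebra.support_coeff_mul_single _ 1 (by simp) _
      rw [h1, LaurentPolynomial.toLaurent_support q]
      intro x hx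
      simp only [Finset.mem_map, Finset.mem_map, addRightEmbedding_apply,
        Nat.castEmbedding_apply] at hx
      obtain ⟨y, hy, rfl⟩ := hx
      obtain ⟨s, hs, rfl⟩ := hy
      have hsS : s ∈ S := hqsupp hs
      rw [hS] at hsS
      obtain ⟨z, hz, rfl⟩ := Finset.mem_image.mp hsS
      have := hmin z hz
      have hzz : ((z + (N : ℤ)).toNat : ℤ) + -(N : ℤ) = z := by omega
      rw [hzz]
      exact hZ'sub hz
    · have : (T 1 - 1 : LaurentPolynomial ℂ) ^ k ∣ Polynomial.toLaurent q := by
        have := map_dvd Polynomial.toLaurent hqdvd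
        rwa [map_pow, map_sub, Polynomial.toLaurent_X, map_one] at this
      exact this.mul_right _
    · intro hdvd'
      have hne : Polynomial.toLaurent q * T (-(N : ℤ)) ≠ 0 :=
        mul_ne_zero (Polynomial.toLaurent_ne_zero.mpr hq0) ((isUnit_T _).ne_zero)
      have hlt := upper_laurent _ hne (k + 1) hdvd'
      have hcard : (Polynomial.toLaurent q * T (-(N : ℤ))).coeff.support.card ≤ k + 1 := by
        have h1 : (Polynomial.toLaurent q * T (-(N : ℤ))).coeff.support =
            (Polynomial.toLaurent q).coeff.support.map (addRightEmbedding (-(N : ℤ))) :=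
          AddMonoidAlgebra.support_coeff_mul_single _ 1 (by simp) _
        rw [h1, Finset.card_map, LaurentPolynomial.toLaurent_support q, Finset.card_map]
        calc q.support.card ≤ S.card := Finset.card_le_card hqsupp
          _ = k + 1 := hScard
      omega
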